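/- Let g be a real Lie algebra, ν a complex-conjugate-linear involutive automorphism of the complexification g_ℂ (a conjugation), and suppose g' is a real form of g_ℂ stable under the conjugation ν of g_ℂ over g. Write g' = (g')⁺ ⊕ (g')⁻ for the ν-eigenspace decomposition. Then g = (g')⁺ + √-1·(g')⁻, and the restriction of ν to g is an involutive (complex-linear) automorphism of g whose +1 eigenspace is (g')⁺. -/

import Mathlib

open TensorProduct

/-- Multiplication by `√-1` on a complex module, viewed as a real-linear map. -/
def smulI (M : Type*) [AddCommGroup M] [Module ℝ M] [Module ℂ M]
    [IsScalarTower ℝ ℂ M] : M →ₗ[ℝ] M where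
  toFun x := Complex.I • x
  map_add' x y := smul_add _ x y
  map_smul' r x := smul_comm Complex.I r x

namespace RealFormAux

variable {L : Type*} [AddCommGroup L] [Module ℝ L]

lemma smulI_apply {M : Type*} [AddCommGroup M] [Module ℝ M] [Module ℂ M]
    [IsScalarTower ℝ ℂ M] (z : M) : smulI M z = Complex.I • z := rfl

lemma smulI_smulI {M : Type*} [AddCommGroup M] [Module ℝ M] [Module ℂ M]
    [IsScalarTower ℝ ℂ M] (z : M) : smulI M (smulI M z) = -z := by
  rw [smulI_apply, smulI_apply, smul_smul, Complex.I_mul_I, neg_one_smul]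

lemma smulI_injective {M : Type*} [AddCommGroup M] [Module ℝ M] [Module ℂ M]
    [IsScalarTower ℝ ℂ M] : Function.Injective (smulI M) := by
  intro a b h
  have := congrArg (smulI M) h
  rw [smulI_smulI, smulI_smulI, neg_inj] at this
  exact this

lemma smulI_tmul (c : ℂ) (x : L) :
    smulI (ℂ ⊗[ℝ] L) (c ⊗ₜ[ℝ] x) = (Complex.I * c) ⊗ₜ[ℝ] x := by
  rw [smulI_apply, smul_tmul', smul_eq_mul]

noncomputable def re : (ℂ ⊗[ℝ] L) →ₗ[ℝ] L :=
  TensorProduct.lift ((LinearMap.lsmul ℝ L).comp Complex.reLm)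

noncomputable def im : (ℂ ⊗[ℝ] L) →ₗ[ℝ] L :=
  TensorProduct.lift ((LinearMap.lsmul ℝ L).comp Complex.imLm)

@[simp] lemma re_tmul (c : ℂ) (x : L) : re (c ⊗ₜ[ℝ] x) = c.re • x := rfl
@[simp] lemma im_tmul (c : ℂ) (x : L) : im (c ⊗ₜ[ℝ] x) = c.im • x := rfl

@[simp] lemma re_mk (x : L) : re (TensorProduct.mk ℝ ℂ L 1 x) = x := by
  simp [TensorProduct.mk_apply]

lemma mk_injective : Function.Injective (TensorProduct.mk ℝ ℂ L 1) := by
  intro a b h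
  have := congrArg re h
  simpa using this

lemma decomp (z : ℂ ⊗[ℝ] L) :
    TensorProduct.mk ℝ ℂ L 1 (re z) + smulI (ℂ ⊗[ℝ] L) (TensorProduct.mk ℝ ℂ L 1 (im z)) = z := by
  induction z using TensorProduct.induction_on with
  | zero => simp
  | tmul c x =>
      rw [re_tmul, im_tmul, TensorProduct.mk_apply, TensorProduct.mk_apply,
        tmul_smul, tmul_smul, map_smul, smulI_tmul, mul_one, smul_tmul', smul_tmul',
        Complex.real_smul, Complex.real_smul, mul_one, ← add_tmul, Complex.re_add_im]
  | add x y hx hy =>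
      conv_rhs => rw [← hx, ← hy]
      simp only [map_add]
      abel

lemma half_eq_zero {M : Type*} [AddCommGroup M] [Module ℝ M] {b : M}
    (h : b + b = 0) : b = 0 := by
  have h2 : (2:ℝ) • b = 0 := by rw [two_smul]; exact h
  have := congrArg (fun w => (2⁻¹:ℝ) • w) h2
  simpa [smul_smul] using this

end RealFormAux

open RealFormAux

/-- Let `ν` be the conjugation of `g_ℂ` over `g` and let `g'` be a real form of `g_ℂ`
(a bracket-closed real subspace with `g_ℂ = g' ⊕ √-1 g'`) stable under `ν`, with
`ν`-eigenspace decomposition `g' = (g')⁺ ⊕ (g')⁻`.  Then `g = (g')⁺ + √-1·(g')⁻`, and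
`ν` induces an involutive automorphism of `g` whose `+1` eigenspace corresponds to
`(g')⁺`. -/
theorem involution_from_real_form {L : Type*} [LieRing L] [LieAlgebra ℝ L]
    (ν : (ℂ ⊗[ℝ] L) →ₗ[ℝ] (ℂ ⊗[ℝ] L))
    (hconj : ∀ (c : ℂ) (x : L), ν (c ⊗ₜ[ℝ] x) = (starRingEnd ℂ c) ⊗ₜ[ℝ] x)
    (hbr : ∀ x y : ℂ ⊗[ℝ] L, ν ⁅x, y⁆ = ⁅ν x, ν y⁆)
    (hinv : ∀ x, ν (ν x) = x)
    (g' : Submodule ℝ (ℂ ⊗[ℝ] L))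
    (hsub : ∀ x ∈ g', ∀ y ∈ g', ⁅x, y⁆ ∈ g')
    (hrf : IsCompl g' (g'.map (smulI (ℂ ⊗[ℝ] L))))
    (hstab : ∀ x ∈ g', ν x ∈ g') :
    LinearMap.range (TensorProduct.mk ℝ ℂ L 1) =
        (g' ⊓ LinearMap.ker (ν - LinearMap.id)) ⊔
          ((g' ⊓ LinearMap.ker (ν + LinearMap.id)).map (smulI (ℂ ⊗[ℝ] L))) ∧
      ∃ σ : L ≃ₗ[ℝ] L, (∀ x y : L, σ ⁅x, y⁆ = ⁅σ x, σ y⁆) ∧ (∀ x, σ (σ x) = x) ∧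
        Submodule.map (TensorProduct.mk ℝ ℂ L 1)
            (LinearMap.ker (σ.toLinearMap - LinearMap.id)) =
          g' ⊓ LinearMap.ker (ν - LinearMap.id) := by
  classical
  set e : L →ₗ[ℝ] ℂ ⊗[ℝ] L := TensorProduct.mk ℝ ℂ L 1 with he
  set sI : (ℂ ⊗[ℝ] L) →ₗ[ℝ] ℂ ⊗[ℝ] L := smulI (ℂ ⊗[ℝ] L) with hsI
  set q : Submodule ℝ (ℂ ⊗[ℝ] L) := g'.map sI with hq
  -- basic facts about ν
  have hνe : ∀ x : L, ν (e x) = e x := by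
    intro x
    rw [he]
    simp only [TensorProduct.mk_apply]
    rw [hconj]
    simp
  have hνI : ∀ z, ν (sI z) = - sI (ν z) := by
    intro z
    induction z using TensorProduct.induction_on with
    | zero => simp
    | tmul c x =>
        rw [hsI, smulI_tmul, hconj, hconj, smulI_tmul, ← neg_tmul]
        congr 1
        rw [map_mul, Complex.conj_I]
        ring
    | add x y hx hy => simp only [map_add, hx, hy, neg_add]
  have hkm : ∀ z, z ∈ LinearMap.ker (ν - LinearMap.id) ↔ ν z = z := by
    intro z
    rw [LinearMap.mem_ker, LinearMap.sub_apply, LinearMap.id_apply, sub_eq_zero]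
  have hkp : ∀ z, z ∈ LinearMap.ker (ν + LinearMap.id) ↔ ν z = -z := by
    intro z
    rw [LinearMap.mem_ker, LinearMap.add_apply, LinearMap.id_apply, add_eq_zero_iff_eq_neg]
  have lieI : ∀ a b : ℂ ⊗[ℝ] L, ⁅a, Complex.I • b⁆ = Complex.I • ⁅a, b⁆ := fun a b =>
    @lie_smul ℂ (ℂ ⊗[ℝ] L) (ℂ ⊗[ℝ] L) _ _ _ _ _ _ _ Complex.I a b
  have Ilie : ∀ a b : ℂ ⊗[ℝ] L, ⁅Complex.I • a, b⁆ = Complex.I • ⁅a, b⁆ := fun a b =>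
    @smul_lie ℂ (ℂ ⊗[ℝ] L) (ℂ ⊗[ℝ] L) _ _ _ _ _ _ _ Complex.I a b
  -- fixed points of ν are exactly the range of e
  have hker : LinearMap.ker (ν - LinearMap.id) = LinearMap.range e := by
    apply le_antisymm
    · intro z hz
      have hz' : ν z = z := (hkm z).mp hz
      have hd := decomp (L := L) z
      rw [← he, ← hsI] at hd
      have h2 : ν (e (re z) + sI (e (im z))) = e (re z) - sI (e (im z)) := by
        rw [map_add, hνe, hνI, hνe, sub_eq_add_neg]
      have h3 : e (re z) + sI (e (im z)) = e (re z) - sI (e (im z)) := by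
        calc e (re z) + sI (e (im z)) = z := hd
          _ = ν z := hz'.symm
          _ = ν (e (re z) + sI (e (im z))) := by rw [hd]
          _ = e (re z) - sI (e (im z)) := h2
      have h4 : sI (e (im z)) + sI (e (im z)) = 0 := by
        have h5 : (e (re z) + sI (e (im z))) - (e (re z) - sI (e (im z))) = 0 := by
          rw [h3, sub_self]
        calc sI (e (im z)) + sI (e (im z))
            = (e (re z) + sI (e (im z))) - (e (re z) - sI (e (im z))) := by abel
          _ = 0 := h5
      have h6 : sI (e (im z)) = 0 := half_eq_zero h4
      refine ⟨re z, ?_⟩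
      conv_rhs => rw [← hd]
      rw [h6, add_zero]
    · rintro _ ⟨x, rfl⟩
      exact (hkm _).mpr (hνe x)
  -- the projections and the conjugation τ with respect to g'
  set P := g'.linearProjOfIsCompl q hrf with hP
  set Q := q.linearProjOfIsCompl g' hrf.symm with hQ
  set τ : (ℂ ⊗[ℝ] L) →ₗ[ℝ] ℂ ⊗[ℝ] L := g'.subtype ∘ₗ P - q.subtype ∘ₗ Q with hτ
  have hPQ : ∀ z, (P z : ℂ ⊗[ℝ] L) + (Q z : ℂ ⊗[ℝ] L) = z := fun z =>
    Submodule.projection_add_projection_eq_self hrf z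
  have hτ_eq : ∀ a ∈ g', ∀ b ∈ q, τ (a + b) = a - b := by
    intro a ha b hb
    have h1 : P a = ⟨a, ha⟩ := Submodule.projectionOnto_apply_left hrf ⟨a, ha⟩
    have h2 : P b = 0 := Submodule.projectionOnto_apply_of_mem_right hrf hb
    have h3 : Q a = 0 := Submodule.projectionOnto_apply_of_mem_right hrf.symm ha
    have h4 : Q b = ⟨b, hb⟩ := Submodule.projectionOnto_apply_left hrf.symm ⟨b, hb⟩
    simp [hτ, map_add, h1, h2, h3, h4, sub_eq_add_neg]
  have hτ_decomp : ∀ z, ∃ a, a ∈ g' ∧ ∃ b, b ∈ q ∧ z = a + b ∧ τ z = a - b := by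
    intro z
    refine ⟨P z, (P z).2, Q z, (Q z).2, (hPQ z).symm, ?_⟩
    conv_lhs => rw [← hPQ z]
    exact hτ_eq _ (P z).2 _ (Q z).2
  have hτg : ∀ a ∈ g', τ a = a := by
    intro a ha
    simpa using hτ_eq a ha 0 q.zero_mem
  have hνq : ∀ b ∈ q, ν b ∈ q := by
    rintro _ ⟨b', hb', rfl⟩
    have : ν (sI b') = - sI (ν b') := hνI b'
    rw [this]
    exact q.neg_mem (Submodule.mem_map_of_mem (hstab b' hb'))
  have hcomm : ∀ z, ν (τ z) = τ (ν z) := by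
    intro z
    obtain ⟨a, ha, b, hb, hzab, hτz⟩ := hτ_decomp z
    have hνz : ν z = ν a + ν b := by rw [hzab, map_add]
    rw [hνz, hτ_eq _ (hstab a ha) _ (hνq b hb), hτz, map_sub]
  have hτinv : ∀ z, τ (τ z) = z := by
    intro z
    obtain ⟨a, ha, b, hb, hzab, hτz⟩ := hτ_decomp z
    rw [hτz, sub_eq_add_neg, hτ_eq _ ha _ (q.neg_mem hb), sub_neg_eq_add, hzab]
  -- τ preserves the range of e
  have hτe : ∀ x : L, ∃ y : L, τ (e x) = e y := by
    intro x
    have h1 : ν (τ (e x)) = τ (e x) := by rw [hcomm, hνe]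
    have hmem : τ (e x) ∈ LinearMap.ker (ν - LinearMap.id) := (hkm _).mpr h1
    rw [hker] at hmem
    obtain ⟨y, hy⟩ := hmem
    exact ⟨y, hy.symm⟩
  -- the induced map on L
  set σ₀ : L →ₗ[ℝ] L := RealFormAux.re ∘ₗ τ ∘ₗ e with hσ₀
  have heσ : ∀ x, e (σ₀ x) = τ (e x) := by
    intro x
    obtain ⟨y, hy⟩ := hτe x
    rw [hσ₀]
    simp only [LinearMap.comp_apply]
    rw [hy, he, re_mk]
  have hσinv : Function.Involutive σ₀ := by
    intro x
    have h1 : e (σ₀ (σ₀ x)) = e x := by rw [heσ, heσ, hτinv]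
    rw [he] at h1
    exact mk_injective h1
  -- bracket membership facts
  have hbr_gq : ∀ a ∈ g', ∀ b ∈ q, ⁅a, b⁆ ∈ q := by
    rintro a ha _ ⟨b', hb', rfl⟩
    have h1 : ⁅a, sI b'⁆ = sI ⁅a, b'⁆ := by
      rw [hsI, smulI_apply, smulI_apply, lieI]
    rw [h1]
    exact Submodule.mem_map_of_mem (hsub a ha b' hb')
  have hbr_qg : ∀ b ∈ q, ∀ a ∈ g', ⁅b, a⁆ ∈ q := by
    rintro _ ⟨b', hb', rfl⟩ a ha
    have h1 : ⁅sI b', a⁆ = sI ⁅b', a⁆ := by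
      rw [hsI, smulI_apply, smulI_apply, Ilie]
    rw [h1]
    exact Submodule.mem_map_of_mem (hsub b' hb' a ha)
  have hbr_qq : ∀ b ∈ q, ∀ d ∈ q, ⁅b, d⁆ ∈ g' := by
    rintro _ ⟨b', hb', rfl⟩ _ ⟨d', hd', rfl⟩
    have h1 : ⁅sI b', sI d'⁆ = -⁅b', d'⁆ := by
      rw [hsI, smulI_apply, smulI_apply, Ilie, lieI, smul_smul,
        Complex.I_mul_I, neg_one_smul]
    rw [h1]
    exact g'.neg_mem (hsub b' hb' d' hd')
  -- τ respects the bracket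
  have hτbr : ∀ z w, τ ⁅z, w⁆ = ⁅τ z, τ w⁆ := by
    intro z w
    obtain ⟨a, ha, b, hb, hz, hτz⟩ := hτ_decomp z
    obtain ⟨c, hc, d, hd, hw, hτw⟩ := hτ_decomp w
    have hzw : ⁅z, w⁆ = (⁅a,c⁆ + ⁅b,d⁆) + (⁅a,d⁆ + ⁅b,c⁆) := by
      rw [hz, hw, add_lie, lie_add, lie_add]
      abel
    rw [hzw, hτ_eq _ (g'.add_mem (hsub a ha c hc) (hbr_qq b hb d hd))
      _ (q.add_mem (hbr_gq a ha d hd) (hbr_qg b hb c hc)), hτz, hτw,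
      sub_lie, lie_sub, lie_sub]
    abel
  have hebr : ∀ x y : L, e ⁅x, y⁆ = ⁅e x, e y⁆ := by
    intro x y
    rw [he]
    simp only [TensorProduct.mk_apply]
    rw [LieAlgebra.ExtendScalars.bracket_tmul, one_mul]
  have hσbr : ∀ x y : L, σ₀ ⁅x, y⁆ = ⁅σ₀ x, σ₀ y⁆ := by
    intro x y
    have h1 : e (σ₀ ⁅x, y⁆) = e ⁅σ₀ x, σ₀ y⁆ := by
      rw [heσ, hebr, hτbr, ← heσ, ← heσ, ← hebr]
    rw [he] at h1
    exact mk_injective h1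
  constructor
  · -- first statement
    apply le_antisymm
    · rintro _ ⟨x, rfl⟩
      obtain ⟨a, ha, b, hb, hzab, -⟩ := hτ_decomp (e x)
      obtain ⟨b', hb', rfl⟩ := hb
      have hν : ν (e x) = e x := hνe x
      have h1 : ν (e x) = ν a - sI (ν b') := by
        rw [hzab, map_add, hνI, sub_eq_add_neg]
      have h2 : a + sI b' = ν a - sI (ν b') := by rw [← h1, hν, hzab]
      have key : a - ν a = sI (-(ν b' + b')) := by
        rw [map_neg, map_add]
        calc a - ν a = (a + sI b') - sI b' - ν a := by abel
          _ = (ν a - sI (ν b')) - sI b' - ν a := by rw [h2]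
          _ = -(sI (ν b') + sI b') := by abel
      have hmem : a - ν a ∈ g' ⊓ q :=
        ⟨g'.sub_mem ha (hstab a ha),
          key ▸ Submodule.mem_map_of_mem (g'.neg_mem (g'.add_mem (hstab b' hb') hb'))⟩
      have h0 : a - ν a = 0 := by
        have := hrf.disjoint.le_bot hmem
        simpa using this
      have hνa : ν a = a := by
        have := sub_eq_zero.mp h0
        exact this.symm
      have hb0 : ν b' = -b' := by
        have h5 : sI (-(ν b' + b')) = 0 := by rw [← key, h0]
        have h6 : -(ν b' + b') = (0 : ℂ ⊗[ℝ] L) := by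
          apply smulI_injective (M := ℂ ⊗[ℝ] L)
          rw [map_zero]
          calc smulI (ℂ ⊗[ℝ] L) (-(ν b' + b')) = sI (-(ν b' + b')) := by rw [hsI]
            _ = 0 := h5
        have h7 : ν b' + b' = 0 := by
          have := congrArg Neg.neg h6
          simpa using this
        exact eq_neg_of_add_eq_zero_left h7
      have m1 : a ∈ g' ⊓ LinearMap.ker (ν - LinearMap.id) := ⟨ha, (hkm a).mpr hνa⟩
      have m2 : sI b' ∈ (g' ⊓ LinearMap.ker (ν + LinearMap.id)).map sI :=
        Submodule.mem_map_of_mem ⟨hb', (hkp b').mpr hb0⟩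
      rw [hzab]
      exact Submodule.add_mem_sup m1 m2
    · apply sup_le
      · intro z hz
        rw [← hker]
        exact hz.2
      · rintro _ ⟨b, ⟨hb1, hb2⟩, rfl⟩
        rw [← hker]
        refine (hkm _).mpr ?_
        rw [hνI, (hkp b).mp hb2, map_neg, neg_neg]
  · -- second statement
    refine ⟨LinearEquiv.ofInvolutive σ₀ hσinv, hσbr, hσinv, ?_⟩
    show Submodule.map e (LinearMap.ker (σ₀ - LinearMap.id)) = g' ⊓ LinearMap.ker (ν - LinearMap.id)
    apply le_antisymm
    · rintro _ ⟨u, hu, rfl⟩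
      have hσu : σ₀ u = u := by
        have := LinearMap.mem_ker.mp hu
        rwa [LinearMap.sub_apply, LinearMap.id_apply, sub_eq_zero] at this
      have hτeu : τ (e u) = e u := by rw [← heσ, hσu]
      refine ⟨?_, (hkm _).mpr (hνe u)⟩
      obtain ⟨a, ha, b, hb, hzab, hτz⟩ := hτ_decomp (e u)
      have hab : a - b = a + b := by rw [← hτz, hτeu, hzab]
      have hbb : b + b = 0 := by
        calc b + b = (a + b) - (a - b) := by abel
          _ = (a + b) - (a + b) := by rw [hab]
          _ = 0 := sub_self _
      have hb0 : b = 0 := half_eq_zero hbb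
      rw [hzab, hb0, add_zero]
      exact ha
    · rintro z ⟨hz1, hz2⟩
      have hz3 : z ∈ LinearMap.range e := by rw [← hker]; exact hz2
      obtain ⟨u, hu⟩ := hz3
      refine ⟨u, ?_, hu⟩
      show u ∈ LinearMap.ker (σ₀ - LinearMap.id)
      rw [LinearMap.mem_ker, LinearMap.sub_apply, LinearMap.id_apply, sub_eq_zero]
      have h1 : e (σ₀ u) = e u := by rw [heσ, hu, hτg z hz1]
      rw [he] at h1
      exact mk_injective h1
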